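/- Let \vec{e} = (e_1 ≤ ⋯ ≤ e_k) be a splitting type with distinct parts d_1 > ⋯ > d_s and multiplicities m_1, …, m_s, and identify {1,…,k} with pairs (j,n), 1 ≤ j ≤ s, 1 ≤ n ≤ m_j, lexicographically. Let w(\vec{e}) be the distinguished permutation of the k-staircase Γ(\vec{e}). Then for each (j,n): w(\vec{e})(j,n) = χ(O(\vec{e})(−d_j)) − (m_1 + ⋯ + m_j) + n, where χ(O(\vec{e})(m)) = ∑_{ℓ=1}^k (e_ℓ + m + 1). -/

import Mathlib

namespace KStairAux

variable {k : ℕ} (e : Fin k → ℤ)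

/-- total width of boundary up to column stage `mm` -/
def A (mm : ℤ) : ℤ := ∑ ℓ, max 0 (e ℓ + mm + 1)
def Bf (mm : ℤ) : ℤ := ∑ ℓ, max 0 (-(e ℓ) - mm - 1)
def U (mm : ℤ) : ℤ := ∑ ℓ, (e ℓ + mm + 1)
def Nf (mm : ℤ) : ℤ := ((Finset.univ.filter (fun ℓ => -mm ≤ e ℓ)).card : ℤ)
def L (mm : ℤ) : ℤ := U e mm - Nf e mm

lemma A_nonneg (mm : ℤ) : 0 ≤ A e mm :=
  Finset.sum_nonneg fun ℓ _ => le_max_left _ _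

lemma A_sub_Bf (mm : ℤ) : A e mm - Bf e mm = U e mm := by
  rw [A, Bf, U, ← Finset.sum_sub_distrib]
  refine Finset.sum_congr rfl fun ℓ _ => ?_
  rcases le_total 0 (e ℓ + mm + 1) with hle | hle
  · rw [max_eq_right hle, max_eq_left (by omega)]; omega
  · rw [max_eq_left hle, max_eq_right (by omega)]; omega

lemma A_mono : Monotone (A e) := fun x y hxy =>
  Finset.sum_le_sum fun ℓ _ => max_le_max le_rfl (by omega)

lemma Bf_anti : Antitone (Bf e) := fun x y hxy =>
  Finset.sum_le_sum fun ℓ _ => max_le_max le_rfl (by omega)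

lemma A_sub_A (mm : ℤ) : A e mm - A e (mm - 1) = Nf e mm := by
  rw [A, A, Nf, ← Finset.sum_sub_distrib]
  rw [← Finset.sum_boole]
  refine Finset.sum_congr rfl fun ℓ _ => ?_
  by_cases hle : -mm ≤ e ℓ
  · rw [if_pos hle, max_eq_right (by omega), max_eq_right (by omega)]; omega
  · rw [if_neg hle, max_eq_left (by omega), max_eq_left (by omega)]; omega

lemma L_eq (mm : ℤ) : L e mm = A e (mm - 1) - Bf e mm := by
  rw [L, ← A_sub_Bf, ← A_sub_A]; ring

lemma Nf_nonneg (mm : ℤ) : 0 ≤ Nf e mm := Int.ofNat_nonneg _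

lemma Nf_le (mm : ℤ) : Nf e mm ≤ k := by
  rw [Nf]
  exact_mod_cast (Finset.card_filter_le _ _).trans (by simp)

lemma U_step (mm : ℤ) : U e mm = U e (mm - 1) + k := by
  rw [U, U, Finset.sum_add_distrib, Finset.sum_add_distrib, Finset.sum_add_distrib,
    Finset.sum_add_distrib]
  simp [Finset.sum_const, mul_comm]
  ring

lemma L_mono : Monotone (L e) := fun x y hxy => by
  rw [L_eq, L_eq]
  have := A_mono e (show x - 1 ≤ y - 1 by omega)
  have := Bf_anti e hxy
  omega

lemma L_le_U (mm : ℤ) : L e mm ≤ U e mm := by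
  have := Nf_nonneg e mm; rw [L]; omega

lemma T_char (hk : 1 ≤ k) (h : ℕ → ℤ)
    (hh : ∀ n : ℕ, 1 ≤ n →
      IsGreatest {v : ℤ | ∃ mm : ℤ, (n : ℤ) ≤ A e mm ∧ v = Bf e mm} (h n))
    (t : ℤ) :
    (∃ c : ℕ, 1 ≤ c ∧ t = (c : ℤ) - h c) ↔ ∃ mm : ℤ, L e mm < t ∧ t ≤ U e mm := by
  classical
  have hne : (Finset.univ : Finset (Fin k)).Nonempty := ⟨⟨0, hk⟩, Finset.mem_univ _⟩
  constructor
  · rintro ⟨c, hc, rfl⟩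
    -- find least mm with c ≤ A e mm
    have hbdd : ∃ b : ℤ, ∀ z : ℤ, (c : ℤ) ≤ A e z → b ≤ z := by
      refine ⟨-(Finset.univ.sup' hne e), fun z hz => ?_⟩
      have hpos : (0 : ℤ) < A e z := lt_of_lt_of_le (by exact_mod_cast hc) hz
      have : ∑ ℓ : Fin k, (0 : ℤ) < ∑ ℓ : Fin k, max 0 (e ℓ + z + 1) := by
        simpa [A] using hpos
      obtain ⟨ℓ, -, hℓ⟩ := Finset.exists_lt_of_sum_lt this
      have h1 : 0 < e ℓ + z + 1 := by
        by_contra hcon; push_neg at hcon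
        rw [max_eq_left hcon] at hℓ; omega
      have h2 : e ℓ ≤ Finset.univ.sup' hne e := Finset.le_sup' e (Finset.mem_univ ℓ)
      omega
    have hinh : ∃ z : ℤ, (c : ℤ) ≤ A e z := by
      refine ⟨(c : ℤ) - 1 - e ⟨0, hk⟩, ?_⟩
      have h1 : max 0 (e ⟨0, hk⟩ + ((c : ℤ) - 1 - e ⟨0, hk⟩) + 1) ≤ A e _ :=
        Finset.single_le_sum (f := fun ℓ => max 0 (e ℓ + ((c : ℤ) - 1 - e ⟨0, hk⟩) + 1))
          (fun ℓ _ => le_max_left _ _) (Finset.mem_univ (⟨0, hk⟩ : Fin k))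
      have h2 : e ⟨0, hk⟩ + ((c : ℤ) - 1 - e ⟨0, hk⟩) + 1 = (c : ℤ) := by ring
      rw [h2] at h1
      exact le_trans (le_max_right 0 _) h1
    obtain ⟨b, hb⟩ := hbdd
    obtain ⟨mm, hmm, hmin⟩ := Int.exists_least_of_bdd (P := fun z => (c : ℤ) ≤ A e z) ⟨b, hb⟩ hinh
    have hhc := hh c hc
    have hval : h c = Bf e mm := by
      obtain ⟨mm', hmm', heq⟩ := hhc.1
      have h1 : mm ≤ mm' := hmin mm' hmm'
      have h2 : Bf e mm' ≤ Bf e mm := Bf_anti e h1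
      have h3 : Bf e mm ≤ h c := hhc.2 ⟨mm, hmm, rfl⟩
      omega
    refine ⟨mm, ?_, ?_⟩
    · have h4 : ¬ ((c : ℤ) ≤ A e (mm - 1)) := fun hcon => by
        have := hmin _ hcon; omega
      rw [L_eq, hval]; omega
    · rw [← A_sub_Bf, hval]; omega
  · rintro ⟨mm, hL, hU⟩
    have h1 : A e (mm - 1) < t + Bf e mm := by rw [L_eq] at hL; omega
    have h2 : t + Bf e mm ≤ A e mm := by rw [← A_sub_Bf] at hU; omega
    have hpos : 1 ≤ t + Bf e mm := by have := A_nonneg e (mm - 1); omega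
    set c : ℕ := (t + Bf e mm).toNat with hc
    have hcz : (c : ℤ) = t + Bf e mm := Int.toNat_of_nonneg (by omega)
    have hc1 : 1 ≤ c := by omega
    have hhc := hh c hc1
    have hval : h c = Bf e mm := by
      have h3 : Bf e mm ≤ h c := hhc.2 ⟨mm, by omega, rfl⟩
      obtain ⟨mm', hmm', heq⟩ := hhc.1
      have h4 : mm ≤ mm' := by
        by_contra hcon; push_neg at hcon
        have : A e mm' ≤ A e (mm - 1) := A_mono e (by omega)
        omega
      have h5 : Bf e mm' ≤ Bf e mm := Bf_anti e h4
      omega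
    exact ⟨c, hc1, by omega⟩

lemma U_mono : Monotone (U e) := fun x y hxy =>
  Finset.sum_le_sum fun ℓ _ => by omega

lemma New_char (t : ℤ) :
    ((∃ mm : ℤ, L e mm < t ∧ t ≤ U e mm) ∧
      ¬ (∃ mm : ℤ, L e mm < t - k ∧ t - k ≤ U e mm)) ↔
    ∃ mm : ℤ, L e mm < t ∧ t ≤ L e (mm - 1) + k := by
  constructor
  · rintro ⟨⟨mm, hL, hU⟩, hno⟩
    refine ⟨mm, hL, ?_⟩
    by_contra hcon; push_neg at hcon
    have hU' : U e mm = U e (mm - 1) + k := U_step e mm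
    exact hno ⟨mm - 1, by omega, by omega⟩
  · rintro ⟨mm, hL, hle⟩
    have hU' : U e mm = U e (mm - 1) + k := U_step e mm
    have hLU : L e (mm - 1) ≤ U e (mm - 1) := L_le_U e _
    refine ⟨⟨mm, hL, by omega⟩, ?_⟩
    rintro ⟨mm', hL', hU'2⟩
    rcases le_or_gt mm' (mm - 2) with hc | hc
    · have h1 : U e mm' ≤ U e (mm - 2) := U_mono e hc
      have h2 : U e (mm - 1) = U e (mm - 1 - 1) + k := U_step e (mm - 1)
      have h3 : mm - 1 - 1 = mm - 2 := by ring
      rw [h3] at h2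
      have h4 : Nf e mm ≤ k := Nf_le e mm
      have h5 : L e mm = U e mm - Nf e mm := rfl
      omega
    · have h1 : L e (mm - 1) ≤ L e mm' := L_mono e (by omega)
      omega

lemma jump_exists (mm : ℤ) (hjump : L e mm < L e (mm - 1) + k) :
    ∃ ℓ : Fin k, e ℓ = -mm := by
  by_contra hcon; push_neg at hcon
  have hft : Finset.univ.filter (fun ℓ => -mm ≤ e ℓ)
      = Finset.univ.filter (fun ℓ => -(mm - 1) ≤ e ℓ) := by
    refine Finset.filter_congr fun ℓ _ => ?_
    have := hcon ℓ
    constructor <;> intro <;> omega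
  have hN : Nf e mm = Nf e (mm - 1) := by rw [Nf, Nf, hft]
  have hU' : U e mm = U e (mm - 1) + k := U_step e mm
  have h5 : L e mm = U e mm - Nf e mm := rfl
  have h6 : L e (mm - 1) = U e (mm - 1) - Nf e (mm - 1) := rfl
  omega

lemma U_linear (mm : ℤ) : U e mm = (∑ ℓ, e ℓ) + k * (mm + 1) := by
  rw [U, Finset.sum_add_distrib, Finset.sum_add_distrib, Finset.sum_const, Finset.sum_const]
  simp; ring

variable {s : ℕ} (d : Fin s → ℤ) (hd : StrictAnti d)
  (hcover : ∀ ℓ : Fin k, ∃ j : Fin s, e ℓ = d j)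
  (m : Fin s → ℕ)
  (hm : ∀ j : Fin s, m j = (Finset.univ.filter (fun ℓ : Fin k => e ℓ = d j)).card)

include hd hcover hm in
lemma card_filter_val (P : ℤ → Prop) [DecidablePred P] :
    ((Finset.univ.filter (fun ℓ => P (e ℓ))).card : ℤ)
      = ∑ j' ∈ Finset.univ.filter (fun j' => P (d j')), (m j' : ℤ) := by
  classical
  have hset : Finset.univ.filter (fun ℓ => P (e ℓ))
      = (Finset.univ.filter (fun j' => P (d j'))).biUnion
          (fun j' => Finset.univ.filter (fun ℓ => e ℓ = d j')) := by
    ext ℓ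
    simp only [Finset.mem_filter, Finset.mem_biUnion, Finset.mem_univ, true_and]
    constructor
    · intro hP
      obtain ⟨j', hj'⟩ := hcover ℓ
      exact ⟨j', by rw [← hj']; exact hP, hj'⟩
    · rintro ⟨j', hP, hj'⟩
      rw [hj']; exact hP
  rw [hset, Finset.card_biUnion]
  · push_cast
    exact Finset.sum_congr rfl fun j' _ => by rw [hm j']
  · intro j₁ _ j₂ _ hne
    refine Finset.disjoint_left.mpr fun ℓ h1 h2 => ?_
    simp only [Finset.mem_filter] at h1 h2
    exact hne (hd.injective (h1.2 ▸ h2.2))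

include hd hcover hm in
lemma Nf_at (j : Fin s) :
    Nf e (-(d j)) = ∑ j' ∈ Finset.univ.filter (fun j' => j' ≤ j), (m j' : ℤ) := by
  classical
  rw [Nf]
  have h1 : Finset.univ.filter (fun ℓ => -(-(d j)) ≤ e ℓ)
      = Finset.univ.filter (fun ℓ => d j ≤ e ℓ) := by
    refine Finset.filter_congr fun ℓ _ => by rw [neg_neg]
  rw [h1, card_filter_val e d hd hcover m hm (fun v => d j ≤ v)]
  refine Finset.sum_congr (Finset.filter_congr fun j' _ => ?_) fun _ _ => rfl
  simp [hd.le_iff_ge]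

include hd hcover hm in
lemma Nf_at' (j : Fin s) :
    Nf e (-(d j) - 1) = ∑ j' ∈ Finset.univ.filter (fun j' => j' < j), (m j' : ℤ) := by
  classical
  rw [Nf]
  have h1 : Finset.univ.filter (fun ℓ => -(-(d j) - 1) ≤ e ℓ)
      = Finset.univ.filter (fun ℓ => d j + 1 ≤ e ℓ) := by
    refine Finset.filter_congr fun ℓ _ => by constructor <;> intro <;> omega
  rw [h1, card_filter_val e d hd hcover m hm (fun v => d j + 1 ≤ v)]
  refine Finset.sum_congr (Finset.filter_congr fun j' _ => ?_) fun _ _ => rfl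
  have : d j + 1 ≤ d j' ↔ d j < d j' := by omega
  simp [this, hd.lt_iff_gt]

include hd hcover hm in
lemma sum_m : ∑ j' : Fin s, (m j' : ℤ) = k := by
  classical
  have := card_filter_val e d hd hcover m hm (fun _ => True)
  simpa using this.symm

include hd hcover hm in
lemma New_blocks (t : ℤ) :
    (∃ mm : ℤ, L e mm < t ∧ t ≤ L e (mm - 1) + k) ↔
    ∃ j : Fin s,
      U e (-(d j)) - (∑ j' ∈ Finset.univ.filter (fun j' => j' ≤ j), (m j' : ℤ)) + 1 ≤ t ∧
      t ≤ U e (-(d j)) - (∑ j' ∈ Finset.univ.filter (fun j' => j' < j), (m j' : ℤ)) := by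
  classical
  constructor
  · rintro ⟨mm, h1, h2⟩
    obtain ⟨ℓ, hℓ⟩ := jump_exists e mm (by omega)
    obtain ⟨j, hj⟩ := hcover ℓ
    have hmm : mm = -(d j) := by omega
    subst hmm
    have hL1 : L e (-(d j)) = U e (-(d j)) - Nf e (-(d j)) := rfl
    have hL2 : L e (-(d j) - 1) = U e (-(d j) - 1) - Nf e (-(d j) - 1) := rfl
    have hU : U e (-(d j)) = U e (-(d j) - 1) + k := U_step e _
    rw [Nf_at e d hd hcover m hm j] at hL1
    rw [Nf_at' e d hd hcover m hm j] at hL2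
    exact ⟨j, by omega, by omega⟩
  · rintro ⟨j, h1, h2⟩
    refine ⟨-(d j), ?_, ?_⟩
    · have hL1 : L e (-(d j)) = U e (-(d j)) - Nf e (-(d j)) := rfl
      rw [Nf_at e d hd hcover m hm j] at hL1
      omega
    · have hL2 : L e (-(d j) - 1) = U e (-(d j) - 1) - Nf e (-(d j) - 1) := rfl
      have hU : U e (-(d j)) = U e (-(d j) - 1) + k := U_step e _
      rw [Nf_at' e d hd hcover m hm j] at hL2
      omega

lemma Mdiff (j : Fin s) :
    ∑ j' ∈ Finset.univ.filter (fun j' => j' ≤ j), (m j' : ℤ)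
      = (∑ j' ∈ Finset.univ.filter (fun j' => j' < j), (m j' : ℤ)) + m j := by
  classical
  have hset : Finset.univ.filter (fun j' => j' ≤ j)
      = insert j (Finset.univ.filter (fun j' => j' < j)) := by
    ext j'
    simp only [Finset.mem_filter, Finset.mem_insert, Finset.mem_univ, true_and]
    rw [le_iff_lt_or_eq]; tauto
  rw [hset, Finset.sum_insert (by simp)]
  ring

lemma MdiffNat (j : Fin s) :
    ∑ j' ∈ Finset.univ.filter (fun j' => j' ≤ j), m j'
      = (∑ j' ∈ Finset.univ.filter (fun j' => j' < j), m j') + m j := by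
  classical
  have := Mdiff m j
  exact_mod_cast this

include hd hcover hm in
lemma sep {j₁ j₂ : Fin s} (hlt : j₁ < j₂) :
    U e (-(d j₁)) - (∑ j' ∈ Finset.univ.filter (fun j' => j' < j₁), (m j' : ℤ))
      ≤ U e (-(d j₂)) - (∑ j' ∈ Finset.univ.filter (fun j' => j' ≤ j₂), (m j' : ℤ)) := by
  classical
  have hdlt : d j₂ < d j₁ := hd hlt
  have hU1 := U_linear e (-(d j₁))
  have hU2 := U_linear e (-(d j₂))
  have hgap : (k : ℤ) * 1 ≤ (k : ℤ) * (d j₁ - d j₂) :=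
    mul_le_mul_of_nonneg_left (by omega) (Int.ofNat_nonneg k)
  have hM : (∑ j' ∈ Finset.univ.filter (fun j' => j' ≤ j₂), (m j' : ℤ)) ≤ k := by
    rw [← sum_m e d hd hcover m hm]
    exact Finset.sum_le_sum_of_subset_of_nonneg (Finset.filter_subset _ _) (fun _ _ _ => Int.ofNat_nonneg _)
  have hMlt : (0 : ℤ) ≤ ∑ j' ∈ Finset.univ.filter (fun j' => j' < j₁), (m j' : ℤ) :=
    Finset.sum_nonneg fun _ _ => Int.ofNat_nonneg _
  have : U e (-(d j₁)) + k ≤ U e (-(d j₂)) := by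
    rw [hU1, hU2]; nlinarith [hgap]
  omega

def lo (j' : Fin s) : ℤ :=
  U e (-(d j')) - (∑ j'' ∈ Finset.univ.filter (fun j'' => j'' ≤ j'), (m j'' : ℤ)) + 1

def hi (j' : Fin s) : ℤ :=
  U e (-(d j')) - ∑ j'' ∈ Finset.univ.filter (fun j'' => j'' < j'), (m j'' : ℤ)

noncomputable def Sblocks : Finset ℤ :=
  Finset.univ.biUnion (fun j' => Finset.Icc (lo e d m j') (hi e d m j'))

lemma mem_Sblocks (t : ℤ) :
    t ∈ Sblocks e d m ↔ ∃ j' : Fin s, lo e d m j' ≤ t ∧ t ≤ hi e d m j' := by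
  simp [Sblocks, Finset.mem_biUnion, Finset.mem_Icc]

include hd hcover hm in
lemma blocks_disjoint {j₁ j₂ : Fin s} (hne : j₁ ≠ j₂) :
    Disjoint (Finset.Icc (lo e d m j₁) (hi e d m j₁))
      (Finset.Icc (lo e d m j₂) (hi e d m j₂)) := by
  refine Finset.disjoint_left.mpr fun x h1 h2 => ?_
  rw [Finset.mem_Icc] at h1 h2
  rcases hne.lt_or_gt with hlt | hlt
  · have := sep e d hd hcover m hm hlt
    rw [lo, hi] at *; omega
  · have := sep e d hd hcover m hm hlt
    rw [lo, hi] at *; omega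

include hd hcover hm in
lemma count_below (j : Fin s) (n : ℕ) (hn : n < m j) :
    ((Sblocks e d m).filter (fun x => x < lo e d m j + n)).card
      = (∑ j' ∈ Finset.univ.filter (fun j' => j' < j), m j') + n := by
  classical
  rw [Sblocks, Finset.filter_biUnion, Finset.card_biUnion]
  · have hcard : ∀ j' : Fin s,
        ((Finset.Icc (lo e d m j') (hi e d m j')).filter
            (fun x => x < lo e d m j + n)).card
          = if j' < j then m j' else if j' = j then n else 0 := by
      intro j'
      rcases lt_trichotomy j' j with hlt | heq | hgt
      · rw [if_pos hlt]
        rw [Finset.filter_true_of_mem]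
        · rw [Int.card_Icc]
          have hMd := Mdiff m j'
          simp only [lo, hi]
          omega
        · intro x hx
          rw [Finset.mem_Icc] at hx
          have hsep := sep e d hd hcover m hm hlt
          simp only [lo, hi] at hx hsep ⊢
          omega
      · subst heq
        rw [if_neg (lt_irrefl j'), if_pos rfl]
        have hMd := Mdiff m j'
        have hIcc : (Finset.Icc (lo e d m j') (hi e d m j')).filter
              (fun x => x < lo e d m j' + n)
            = Finset.Icc (lo e d m j') (lo e d m j' + n - 1) := by
          ext x
          rw [Finset.mem_filter, Finset.mem_Icc, Finset.mem_Icc]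
          simp only [lo, hi]
          omega
        rw [hIcc, Int.card_Icc]
        omega
      · rw [if_neg (by omega : ¬ j' < j), if_neg (by omega : ¬ j' = j)]
        rw [Finset.filter_false_of_mem, Finset.card_empty]
        intro x hx
        rw [Finset.mem_Icc] at hx
        have hsep := sep e d hd hcover m hm hgt
        have hMd := Mdiff m j
        simp only [lo, hi] at hx hsep ⊢
        omega
    rw [Finset.sum_congr rfl fun j' _ => hcard j']
    rw [← Finset.sum_filter_add_sum_filter_not Finset.univ (fun j' => j' < j)]
    congr 1
    · exact Finset.sum_congr rfl fun j' hj' => if_pos (Finset.mem_filter.mp hj').2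
    · rw [Finset.sum_eq_single_of_mem j (by simp)]
      · rw [if_neg (lt_irrefl j), if_pos rfl]
      · intro j'' hmem hne
        rw [Finset.mem_filter] at hmem
        rw [if_neg hmem.2, if_neg hne]
  · intro j₁ _ j₂ _ hne
    exact Finset.disjoint_filter_filter (blocks_disjoint e d hd hcover m hm hne)

lemma mem_Sblocks_self (j : Fin s) (n : ℕ) (hn : n < m j) :
    lo e d m j + n ∈ Sblocks e d m := by
  rw [mem_Sblocks]
  refine ⟨j, by omega, ?_⟩
  have hMd := Mdiff m j
  simp only [lo, hi]
  omega

lemma count_inj {S : Finset ℤ} {t u : ℤ} (ht : t ∈ S) (hu : u ∈ S)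
    (hcount : (S.filter (fun x => x < t)).card = (S.filter (fun x => x < u)).card) :
    t = u := by
  classical
  rcases lt_trichotomy t u with hlt | heq | hgt
  · exfalso
    have hsub : S.filter (fun x => x < t) ⊆ S.filter (fun x => x < u) :=
      Finset.monotone_filter_right S (fun x hx => by omega)
    have hss : S.filter (fun x => x < t) ⊂ S.filter (fun x => x < u) :=
      (Finset.ssubset_iff_of_subset hsub).mpr
        ⟨t, Finset.mem_filter.mpr ⟨ht, hlt⟩, fun hmem => by
          have := (Finset.mem_filter.mp hmem).2; omega⟩
    exact absurd hcount (Finset.card_lt_card hss).ne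
  · exact heq
  · exfalso
    have hsub : S.filter (fun x => x < u) ⊆ S.filter (fun x => x < t) :=
      Finset.monotone_filter_right S (fun x hx => by omega)
    have hss : S.filter (fun x => x < u) ⊂ S.filter (fun x => x < t) :=
      (Finset.ssubset_iff_of_subset hsub).mpr
        ⟨u, Finset.mem_filter.mpr ⟨hu, hgt⟩, fun hmem => by
          have := (Finset.mem_filter.mp hmem).2; omega⟩
    exact absurd hcount.symm (Finset.card_lt_card hss).ne

end KStairAux

open KStairAux

/-- Proposition `endpos`: the distinguished affine permutation `w(e)` of
the `k`-staircase `Γ(e)` — characterized by strict monotonicity and by the fact that its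
values are exactly the diagonal indices `t` of horizontal boundary segments of `Γ(e)`
(namely `t = c − h(c)` for some column `c ≥ 1`) that are first in their residue class
(i.e. `t − k` is not of that form) — satisfies, under the lexicographic identification of
`{1,…,k}` with pairs `(j, n)` (`1 ≤ j ≤ s`, `1 ≤ n ≤ m_j`):
`w(e)(j, n) = χ(O(e)(−d_j)) − (m_1 + ⋯ + m_j) + n`. -/
theorem kstaircase_distinguished_permutation_values
    (k : ℕ) (hk : 1 ≤ k) (e : Fin k → ℤ) (he : Monotone e)
    (s : ℕ) (d : Fin s → ℤ) (hd : StrictAnti d)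
    (hcover : ∀ ℓ : Fin k, ∃ j : Fin s, e ℓ = d j)
    (hocc : ∀ j : Fin s, ∃ ℓ : Fin k, e ℓ = d j)
    (m : Fin s → ℕ)
    (hm : ∀ j : Fin s, m j = (Finset.univ.filter (fun ℓ : Fin k => e ℓ = d j)).card)
    (h : ℕ → ℤ)
    (hh : ∀ n : ℕ, 1 ≤ n →
      IsGreatest {v : ℤ | ∃ mm : ℤ,
        (n : ℤ) ≤ ∑ ℓ : Fin k, max 0 (e ℓ + mm + 1) ∧
        v = ∑ ℓ : Fin k, max 0 (-(e ℓ) - mm - 1)} (h n))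
    (w : Fin k → ℤ) (hwmono : StrictMono w)
    (hwspec : ∀ v : ℤ,
      ((∃ c : ℕ, 1 ≤ c ∧ v = (c : ℤ) - h c) ∧
        ¬ (∃ c : ℕ, 1 ≤ c ∧ v - (k : ℤ) = (c : ℤ) - h c)) ↔ ∃ ℓ : Fin k, w ℓ = v) :
    ∀ (ℓ : Fin k) (j : Fin s) (n : ℕ),
      (ℓ : ℕ) = (∑ j' ∈ Finset.univ.filter (fun j' => j' < j), m j') + n → n < m j →
      w ℓ = (∑ ℓ' : Fin k, (e ℓ' + (-(d j)) + 1))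
        - (∑ j' ∈ Finset.univ.filter (fun j' => j' ≤ j), (m j' : ℤ)) + ((n : ℤ) + 1) := by
  classical
  intro ℓ j n hℓ hn
  have hh' : ∀ n : ℕ, 1 ≤ n →
      IsGreatest {v : ℤ | ∃ mm : ℤ, (n : ℤ) ≤ A e mm ∧ v = Bf e mm} (h n) := hh
  have hS : ∀ t : ℤ, t ∈ Sblocks e d m ↔ ∃ ℓ' : Fin k, w ℓ' = t := by
    intro t
    rw [← hwspec t, mem_Sblocks,
      T_char e hk h hh' t, T_char e hk h hh' (t - (k : ℤ)), New_char e t,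
      New_blocks e d hd hcover m hm t]
    simp only [lo, hi]
  have hwS : w ℓ ∈ Sblocks e d m := (hS _).mpr ⟨ℓ, rfl⟩
  have htS : lo e d m j + n ∈ Sblocks e d m := mem_Sblocks_self e d m j n hn
  have hcount_t := count_below e d hd hcover m hm j n hn
  have hcount_w : ((Sblocks e d m).filter (fun x => x < w ℓ)).card = ℓ.val := by
    have himg2 : (Sblocks e d m).filter (fun x => x < w ℓ)
        = Finset.image w (Finset.univ.filter (fun ℓ' => ℓ' < ℓ)) := by
      ext x
      simp only [Finset.mem_filter, Finset.mem_image, Finset.mem_univ, true_and]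
      constructor
      · rintro ⟨hxS, hxlt⟩
        obtain ⟨ℓ', rfl⟩ := (hS x).mp hxS
        exact ⟨ℓ', hwmono.lt_iff_lt.mp hxlt, rfl⟩
      · rintro ⟨ℓ', hlt, rfl⟩
        exact ⟨(hS _).mpr ⟨ℓ', rfl⟩, hwmono hlt⟩
    rw [himg2, Finset.card_image_of_injective _ hwmono.injective]
    have hIio : Finset.univ.filter (fun ℓ' => ℓ' < ℓ) = Finset.Iio ℓ := by
      ext x; simp
    rw [hIio, Fin.card_Iio]
  have heq : lo e d m j + n = w ℓ :=
    count_inj htS hwS (by rw [hcount_t, hcount_w]; exact hℓ.symm)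
  rw [← heq]
  have hU : U e (-(d j)) = ∑ ℓ' : Fin k, (e ℓ' + (-(d j)) + 1) := rfl
  simp only [lo]
  omega
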